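/- Define a relation ≪ on the group Lo¹_{n+1} of lower unitriangular matrices by L₀ ≪ L₁ iff L₀^{-1}L₁ is totally positive, and L₀ ≤ L₁ iff all the relevant minors of L₀^{-1}L₁ are nonnegative. Then ≤ is transitive, and L₀ ≤ L₁ ≪ L₂ implies L₀ ≪ L₂ (and symmetrically L₀ ≪ L₁ ≤ L₂ implies L₀ ≪ L₂). -/

import Mathlib

open Matrix

/-- A lower unitriangular matrix. -/
def LowerUni {n : ℕ} (L : Matrix (Fin n) (Fin n) ℝ) : Prop :=
  (∀ i, L i i = 1) ∧ ∀ i j : Fin n, i < j → L i j = 0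

/-- Totally positive (as a lower unitriangular matrix): every minor `det(L_{i₀,i₁})`
with equal-size index sets `i₀ ≥ i₁` componentwise (in increasing order) is positive. -/
def TotPos {n : ℕ} (L : Matrix (Fin n) (Fin n) ℝ) : Prop :=
  ∀ (k : ℕ) (r c : Fin k → Fin n), StrictMono r → StrictMono c →
    (∀ m, c m ≤ r m) → 0 < (L.submatrix r c).det

/-- In the closure of the totally positive matrices: all such minors are nonnegative. -/
def TotNonneg {n : ℕ} (L : Matrix (Fin n) (Fin n) ℝ) : Prop :=
  ∀ (k : ℕ) (r c : Fin k → Fin n), StrictMono r → StrictMono c →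
    (∀ m, c m ≤ r m) → 0 ≤ (L.submatrix r c).det

/-- `L₀ ≪ L₁` iff `L₀⁻¹L₁` is totally positive. -/
def LL {n : ℕ} (L₀ L₁ : Matrix (Fin n) (Fin n) ℝ) : Prop := TotPos (L₀⁻¹ * L₁)

/-- `L₀ ≤ L₁` iff all the relevant minors of `L₀⁻¹L₁` are nonnegative. -/
def LE' {n : ℕ} (L₀ L₁ : Matrix (Fin n) (Fin n) ℝ) : Prop := TotNonneg (L₀⁻¹ * L₁)

open Finset Equiv BigOperators

open scoped Classical

namespace TPAux

variable {N k : ℕ}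

/-- Step 1 of Cauchy–Binet: expand `det (A * B)` as a sum over all functions. -/
lemma det_mul_expand (A : Matrix (Fin k) (Fin N) ℝ) (B : Matrix (Fin N) (Fin k) ℝ) :
    (A * B).det =
      ∑ f : Fin k → Fin N, (A.submatrix id f).det * ∏ i, B (f i) i := by
  have h1 : (A * B).det =
      ∑ f : Fin k → Fin N, ∑ σ : Equiv.Perm (Fin k),
        ((Equiv.Perm.sign σ : ℤ) : ℝ) * ∏ i, A (σ i) (f i) * B (f i) i := by
    simp only [det_apply', mul_apply, Finset.prod_univ_sum, Finset.mul_sum,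
      Fintype.piFinset_univ]
    rw [Finset.sum_comm]
  rw [h1]
  refine Finset.sum_congr rfl fun f _ => ?_
  have h2 : (A.submatrix id f).det =
      ∑ σ : Equiv.Perm (Fin k), ((Equiv.Perm.sign σ : ℤ) : ℝ) * ∏ i, A (σ i) (f i) := by
    rw [det_apply']
    rfl
  rw [h2, Finset.sum_mul]
  refine Finset.sum_congr rfl fun σ _ => ?_
  rw [mul_assoc, ← Finset.prod_mul_distrib]

/-- The Cauchy–Binet formula for `k × N` times `N × k` matrices. -/
lemma cauchyBinet (A : Matrix (Fin k) (Fin N) ℝ) (B : Matrix (Fin N) (Fin k) ℝ) :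
    (A * B).det =
      ∑ s ∈ Finset.univ.filter (fun s : Fin k → Fin N => StrictMono s),
        (A.submatrix id s).det * (B.submatrix s id).det := by
  rw [det_mul_expand]
  -- restrict to injective functions
  have h2 : (∑ f : Fin k → Fin N, (A.submatrix id f).det * ∏ i, B (f i) i) =
      ∑ f ∈ Finset.univ.filter (fun f : Fin k → Fin N => Function.Injective f),
        (A.submatrix id f).det * ∏ i, B (f i) i := by
    refine (Finset.sum_subset (Finset.filter_subset _ _) fun f _ hf => ?_).symm
    have hinj : ¬ Function.Injective f := by
      simpa using hf
    rw [Function.Injective] at hinj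
    push_neg at hinj
    obtain ⟨i, j, hfij, hij⟩ := hinj
    have : (A.submatrix id f).det = 0 :=
      Matrix.det_zero_of_column_eq hij (fun x => by simp [hfij])
    rw [this, zero_mul]
  rw [h2]
  -- group injective functions as strictly monotone ∘ permutation
  have h3 : (∑ f ∈ Finset.univ.filter (fun f : Fin k → Fin N => Function.Injective f),
        (A.submatrix id f).det * ∏ i, B (f i) i) =
      ∑ p ∈ (Finset.univ.filter (fun s : Fin k → Fin N => StrictMono s)) ×ˢ
          (Finset.univ : Finset (Equiv.Perm (Fin k))),
        (A.submatrix id (p.1 ∘ p.2)).det * ∏ i, B ((p.1 ∘ p.2) i) i := by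
    refine Finset.sum_nbij'
      (i := fun f => (f ∘ Tuple.sort f, (Tuple.sort f)⁻¹))
      (j := fun p => p.1 ∘ p.2) ?_ ?_ ?_ ?_ ?_
    · intro f hf
      have hinj : Function.Injective f := by simpa using hf
      have hmono : Monotone (f ∘ Tuple.sort f) := Tuple.monotone_sort f
      have hsm : StrictMono (f ∘ Tuple.sort f) :=
        hmono.strictMono_of_injective (hinj.comp (Tuple.sort f).injective)
      simp [Finset.mem_product, hsm]
    · intro p hp
      have hsm : StrictMono p.1 := by
        have := (Finset.mem_product.1 hp).1
        simpa using this
      have : Function.Injective (p.1 ∘ p.2) := hsm.injective.comp p.2.injective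
      simpa using this
    · -- left inverse
      intro f hf
      show (f ∘ ⇑(Tuple.sort f)) ∘ ⇑(Tuple.sort f)⁻¹ = f
      funext x
      simp
    · -- right inverse
      rintro ⟨s, σ⟩ hp
      have hsm : StrictMono s := by
        have := (Finset.mem_product.1 hp).1
        simpa using this
      simp only
      have hinj : Function.Injective (s ∘ ⇑σ) := hsm.injective.comp σ.injective
      have hmono : Monotone ((s ∘ ⇑σ) ∘ Tuple.sort (s ∘ ⇑σ)) :=
        Tuple.monotone_sort (s ∘ ⇑σ)
      have hsm2 : StrictMono ((s ∘ ⇑σ) ∘ ⇑(Tuple.sort (s ∘ ⇑σ))) :=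
        hmono.strictMono_of_injective (hinj.comp (Tuple.sort (s ∘ ⇑σ)).injective)
      have hrange : Set.range ((s ∘ ⇑σ) ∘ ⇑(Tuple.sort (s ∘ ⇑σ))) = Set.range s := by
        rw [Set.range_comp, (Tuple.sort (s ∘ ⇑σ)).surjective.range_eq, Set.image_univ,
          Set.range_comp, σ.surjective.range_eq, Set.image_univ]
      have heq : ((s ∘ ⇑σ) ∘ ⇑(Tuple.sort (s ∘ ⇑σ)) : Fin k → Fin N) = s := by
        set_option linter.deprecated false in
        exact (hsm2.range_inj hsm).1 hrange
      have hστ : ∀ x, σ (Tuple.sort (s ∘ ⇑σ) x) = x := by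
        intro x
        have := congrFun heq x
        simp only [Function.comp_apply] at this
        exact hsm.injective this
      have hτeq : Tuple.sort (s ∘ ⇑σ) = σ⁻¹ :=
        Equiv.ext fun x => (Equiv.eq_symm_apply σ).2 (hστ x)
      refine Prod.ext ?_ ?_
      · exact heq
      · show (Tuple.sort (s ∘ ⇑σ))⁻¹ = σ
        rw [hτeq, inv_inv]
    · intro f hf
      have h' : (f ∘ ⇑(Tuple.sort f)) ∘ ⇑((Tuple.sort f)⁻¹) = f := by
        funext x
        simp
      show _ = (A.submatrix id ((f ∘ ⇑(Tuple.sort f)) ∘ ⇑((Tuple.sort f)⁻¹))).det *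
        ∏ x, B (((f ∘ ⇑(Tuple.sort f)) ∘ ⇑((Tuple.sort f)⁻¹)) x) x
      rw [h']
  rw [h3, Finset.sum_product]
  refine Finset.sum_congr rfl fun s hs => ?_
  have hsm : StrictMono s := by simpa using hs
  -- inner sum over permutations gives det (B.submatrix s id)
  have hdetB : (B.submatrix s id).det =
      ∑ σ : Equiv.Perm (Fin k), ((Equiv.Perm.sign σ : ℤ) : ℝ) * ∏ i, B (s (σ i)) i := by
    rw [det_apply']
    rfl
  have hAσ : ∀ σ : Equiv.Perm (Fin k),
      (A.submatrix id (s ∘ ⇑σ)).det =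
        ((Equiv.Perm.sign σ : ℤ) : ℝ) * (A.submatrix id s).det := by
    intro σ
    have h4 : A.submatrix id (s ∘ ⇑σ) = (A.submatrix id s).submatrix id ⇑σ := rfl
    rw [h4, Matrix.det_permute']
  calc (∑ σ : Equiv.Perm (Fin k),
          (A.submatrix id (s ∘ ⇑σ)).det * ∏ i, B ((s ∘ ⇑σ) i) i)
      = ∑ σ : Equiv.Perm (Fin k),
          (A.submatrix id s).det * (((Equiv.Perm.sign σ : ℤ) : ℝ) * ∏ i, B (s (σ i)) i) := by
        refine Finset.sum_congr rfl fun σ _ => ?_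
        rw [hAσ σ]
        simp only [Function.comp_apply]
        ring
    _ = (A.submatrix id s).det * (B.submatrix s id).det := by
        rw [← Finset.mul_sum, hdetB]

/-- A lower triangular matrix has vanishing minor when some row index is less
than the corresponding column index. -/
lemma det_submatrix_eq_zero {A : Matrix (Fin N) (Fin N) ℝ}
    (hA : ∀ i j : Fin N, i < j → A i j = 0) {r s : Fin k → Fin N}
    (hr : Monotone r) (hs : Monotone s) {m : Fin k} (hm : r m < s m) :
    (A.submatrix r s).det = 0 := by
  rw [det_apply]
  refine Finset.sum_eq_zero fun σ _ => ?_
  obtain ⟨j, hj1, hj2⟩ : ∃ j : Fin k, m ≤ j ∧ σ j ≤ m := by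
    by_contra h
    push_neg at h
    have hmap : ∀ j ∈ Finset.Ici m, σ j ∈ Finset.Ioi m := by
      intro j hj
      exact Finset.mem_Ioi.2 (h j (Finset.mem_Ici.1 hj))
    have hcard := Finset.card_le_card_of_injOn σ hmap (σ.injective.injOn)
    rw [Fin.card_Ici, Fin.card_Ioi] at hcard
    have := m.is_lt
    omega
  have hzero : A.submatrix r s (σ j) j = 0 := by
    have : r (σ j) < s j := lt_of_le_of_lt (hr hj2) (lt_of_lt_of_le hm (hs hj1))
    exact hA _ _ this
  have : (∏ i, A.submatrix r s (σ i) i) = 0 :=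
    Finset.prod_eq_zero (Finset.mem_univ j) hzero
  rw [this, smul_zero]

/-- The minor of a lower unitriangular matrix with equal row and column sets is 1. -/
lemma det_submatrix_self {A : Matrix (Fin N) (Fin N) ℝ} (hA : LowerUni A)
    {r : Fin k → Fin N} (hr : StrictMono r) :
    (A.submatrix r r).det = 1 := by
  have htri : (A.submatrix r r).BlockTriangular OrderDual.toDual := by
    intro i j hij
    exact hA.2 _ _ (hr (by exact hij))
  rw [Matrix.det_of_lowerTriangular _ htri]
  simp [Matrix.diag, hA.1]

lemma lowerUni_det {A : Matrix (Fin N) (Fin N) ℝ} (hA : LowerUni A) : A.det = 1 := by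
  have htri : A.BlockTriangular OrderDual.toDual := fun i j hij => hA.2 _ _ hij
  rw [Matrix.det_of_lowerTriangular _ htri]
  simp [Matrix.diag, hA.1]

lemma lowerUni_mul {A B : Matrix (Fin N) (Fin N) ℝ} (hA : LowerUni A) (hB : LowerUni B) :
    LowerUni (A * B) := by
  constructor
  · intro i
    rw [Matrix.mul_apply]
    rw [Finset.sum_eq_single i]
    · rw [hA.1, hB.1, one_mul]
    · intro x _ hx
      rcases lt_or_gt_of_ne hx with h | h
      · rw [hB.2 _ _ h, mul_zero]
      · rw [hA.2 _ _ h, zero_mul]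
    · intro h; exact absurd (Finset.mem_univ i) h
  · intro i j hij
    rw [Matrix.mul_apply]
    refine Finset.sum_eq_zero fun x _ => ?_
    rcases lt_or_ge i x with h | h
    · rw [hA.2 _ _ h, zero_mul]
    · rw [hB.2 _ _ (lt_of_le_of_lt h hij), mul_zero]

lemma lowerUni_inv {A : Matrix (Fin N) (Fin N) ℝ} (hA : LowerUni A) : LowerUni A⁻¹ := by
  have hdet : A.det = 1 := lowerUni_det hA
  have hunit : IsUnit A.det := by rw [hdet]; exact isUnit_one
  have : Invertible A := A.invertibleOfIsUnitDet hunit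
  have htri : A.BlockTriangular OrderDual.toDual := fun i j hij => hA.2 _ _ hij
  have hitri : A⁻¹.BlockTriangular OrderDual.toDual :=
    Matrix.blockTriangular_inv_of_blockTriangular htri
  have hupper : ∀ i j : Fin N, i < j → A⁻¹ i j = 0 := fun i j hij => hitri hij
  refine ⟨fun i => ?_, hupper⟩
  have h1 : (A⁻¹ * A) i i = 1 := by
    rw [Matrix.nonsing_inv_mul A hunit]
    simp
  rw [Matrix.mul_apply] at h1
  rw [Finset.sum_eq_single i] at h1
  · rwa [hA.1, mul_one] at h1
  · intro x _ hx
    rcases lt_or_gt_of_ne hx with h | h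
    · rw [hA.2 _ _ h, mul_zero]
    · rw [hupper _ _ h, zero_mul]
  · intro h; exact absurd (Finset.mem_univ i) h

lemma submatrix_mul_eq (A B : Matrix (Fin N) (Fin N) ℝ) (r c : Fin k → Fin N) :
    (A * B).submatrix r c = A.submatrix r id * B.submatrix id c := by
  ext i j
  simp [Matrix.mul_apply]

/-- Product of totally nonnegative lower unitriangular matrices is totally nonnegative. -/
lemma totNonneg_mul {A B : Matrix (Fin N) (Fin N) ℝ} (hA : LowerUni A) (hB : LowerUni B)
    (ha : TotNonneg A) (hb : TotNonneg B) : TotNonneg (A * B) := by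
  intro k r c hr hc hrc
  rw [submatrix_mul_eq, cauchyBinet]
  refine Finset.sum_nonneg fun s hs => ?_
  have hsm : StrictMono s := by simpa using hs
  rw [Matrix.submatrix_submatrix, Matrix.submatrix_submatrix]
  simp only [Function.comp_id, Function.id_comp]
  by_cases h1 : ∀ m, s m ≤ r m
  · by_cases h2 : ∀ m, c m ≤ s m
    · exact mul_nonneg (ha k r s hr hsm h1) (hb k s c hsm hc h2)
    · push_neg at h2
      obtain ⟨m, hm⟩ := h2
      rw [det_submatrix_eq_zero hB.2 hsm.monotone hc.monotone hm, mul_zero]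
  · push_neg at h1
    obtain ⟨m, hm⟩ := h1
    rw [det_submatrix_eq_zero hA.2 hr.monotone hsm.monotone hm, zero_mul]

/-- Totally nonnegative times totally positive is totally positive
(both lower unitriangular). -/
lemma totNonneg_mul_totPos {A B : Matrix (Fin N) (Fin N) ℝ} (hA : LowerUni A)
    (hB : LowerUni B) (ha : TotNonneg A) (hb : TotPos B) : TotPos (A * B) := by
  intro k r c hr hc hrc
  rw [submatrix_mul_eq, cauchyBinet]
  have hterm : ∀ s ∈ Finset.univ.filter (fun s : Fin k → Fin N => StrictMono s),
      0 ≤ ((A.submatrix r id).submatrix id s).det * ((B.submatrix id c).submatrix s id).det := by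
    intro s hs
    have hsm : StrictMono s := by simpa using hs
    rw [Matrix.submatrix_submatrix, Matrix.submatrix_submatrix]
    simp only [Function.comp_id, Function.id_comp]
    by_cases h1 : ∀ m, s m ≤ r m
    · by_cases h2 : ∀ m, c m ≤ s m
      · exact mul_nonneg (ha k r s hr hsm h1) (le_of_lt (hb k s c hsm hc h2))
      · push_neg at h2
        obtain ⟨m, hm⟩ := h2
        rw [det_submatrix_eq_zero hB.2 hsm.monotone hc.monotone hm, mul_zero]
    · push_neg at h1
      obtain ⟨m, hm⟩ := h1
      rw [det_submatrix_eq_zero hA.2 hr.monotone hsm.monotone hm, zero_mul]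
  have hrmem : r ∈ Finset.univ.filter (fun s : Fin k → Fin N => StrictMono s) := by
    simp [hr]
  have hpos : 0 < ((A.submatrix r id).submatrix id r).det *
      ((B.submatrix id c).submatrix r id).det := by
    rw [Matrix.submatrix_submatrix, Matrix.submatrix_submatrix]
    simp only [Function.comp_id, Function.id_comp]
    rw [det_submatrix_self hA hr, one_mul]
    exact hb k r c hr hc hrc
  calc (0 : ℝ) < ((A.submatrix r id).submatrix id r).det *
        ((B.submatrix id c).submatrix r id).det := hpos
    _ ≤ _ := Finset.single_le_sum hterm hrmem

/-- Totally positive times totally nonnegative is totally positive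
(both lower unitriangular). -/
lemma totPos_mul_totNonneg {A B : Matrix (Fin N) (Fin N) ℝ} (hA : LowerUni A)
    (hB : LowerUni B) (ha : TotPos A) (hb : TotNonneg B) : TotPos (A * B) := by
  intro k r c hr hc hrc
  rw [submatrix_mul_eq, cauchyBinet]
  have hterm : ∀ s ∈ Finset.univ.filter (fun s : Fin k → Fin N => StrictMono s),
      0 ≤ ((A.submatrix r id).submatrix id s).det * ((B.submatrix id c).submatrix s id).det := by
    intro s hs
    have hsm : StrictMono s := by simpa using hs
    rw [Matrix.submatrix_submatrix, Matrix.submatrix_submatrix]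
    simp only [Function.comp_id, Function.id_comp]
    by_cases h1 : ∀ m, s m ≤ r m
    · by_cases h2 : ∀ m, c m ≤ s m
      · exact mul_nonneg (le_of_lt (ha k r s hr hsm h1)) (hb k s c hsm hc h2)
      · push_neg at h2
        obtain ⟨m, hm⟩ := h2
        rw [det_submatrix_eq_zero hB.2 hsm.monotone hc.monotone hm, mul_zero]
    · push_neg at h1
      obtain ⟨m, hm⟩ := h1
      rw [det_submatrix_eq_zero hA.2 hr.monotone hsm.monotone hm, zero_mul]
  have hcmem : c ∈ Finset.univ.filter (fun s : Fin k → Fin N => StrictMono s) := by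
    simp [hc]
  have hpos : 0 < ((A.submatrix r id).submatrix id c).det *
      ((B.submatrix id c).submatrix c id).det := by
    rw [Matrix.submatrix_submatrix, Matrix.submatrix_submatrix]
    simp only [Function.comp_id, Function.id_comp]
    rw [det_submatrix_self hB hc, mul_one]
    exact ha k r c hr hc hrc
  calc (0 : ℝ) < ((A.submatrix r id).submatrix id c).det *
        ((B.submatrix id c).submatrix c id).det := hpos
    _ ≤ _ := Finset.single_le_sum hterm hcmem

end TPAux

/-- `≤` is transitive; `L₀ ≤ L₁ ≪ L₂` implies `L₀ ≪ L₂`; and `L₀ ≪ L₁ ≤ L₂` implies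
`L₀ ≪ L₂` (for lower unitriangular matrices). -/
theorem le_ll_trans (n : ℕ) (L₀ L₁ L₂ : Matrix (Fin (n + 1)) (Fin (n + 1)) ℝ)
    (h₀ : LowerUni L₀) (h₁ : LowerUni L₁) (h₂ : LowerUni L₂) :
    (LE' L₀ L₁ → LE' L₁ L₂ → LE' L₀ L₂) ∧
    (LE' L₀ L₁ → LL L₁ L₂ → LL L₀ L₂) ∧
    (LL L₀ L₁ → LE' L₁ L₂ → LL L₀ L₂) := by
  have h₁unit : IsUnit L₁.det := by
    rw [TPAux.lowerUni_det h₁]; exact isUnit_one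
  have hkey : L₀⁻¹ * L₂ = (L₀⁻¹ * L₁) * (L₁⁻¹ * L₂) := by
    rw [Matrix.mul_assoc, ← Matrix.mul_assoc L₁, Matrix.mul_nonsing_inv _ h₁unit,
      Matrix.one_mul]
  have hP : LowerUni (L₀⁻¹ * L₁) := TPAux.lowerUni_mul (TPAux.lowerUni_inv h₀) h₁
  have hQ : LowerUni (L₁⁻¹ * L₂) := TPAux.lowerUni_mul (TPAux.lowerUni_inv h₁) h₂
  refine ⟨?_, ?_, ?_⟩
  · intro hab hbc
    unfold LE' at *
    rw [hkey]
    exact TPAux.totNonneg_mul hP hQ hab hbc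
  · intro hab hbc
    unfold LE' LL at *
    rw [hkey]
    exact TPAux.totNonneg_mul_totPos hP hQ hab hbc
  · intro hab hbc
    unfold LE' LL at *
    rw [hkey]
    exact TPAux.totPos_mul_totNonneg hP hQ hab hbc
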